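/- Let a and b be coprime positive integers with a odd, b even and b not divisible by 8, and let p be a prime with p ≡ 1 (mod 8) such that p ≠ ab, p ≠ ab + 1, and p = x² + aby² for some integers x, y. Then y is even, n = (a+b)(p−1)/8 is a nonnegative integer, and (−1)^{y/2} · (4x² − 2p) = λ(a, b; n+1). -/

import Mathlib

/-- sign making an odd integer ≡ 1 mod 4 -/
def sgn4 (m : ℤ) : ℤ := if m % 4 = 1 then 1 else -1

lemma sgn4_sq (m : ℤ) : (sgn4 m)^2 = 1 := by
  unfold sgn4; split_ifs <;> norm_num

lemma sgn4_mul_self_mod (m : ℤ) (hm : m % 2 = 1) : (sgn4 m * m) % 4 = 1 := by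
  unfold sgn4; split_ifs with h <;> omega

lemma sign_fix (s m u : ℤ) (hs : s = 1 ∨ s = -1) (hu : u % 4 = 1)
    (h : u = s * m) : u = sgn4 m * m := by
  unfold sgn4; split_ifs with h4 <;> rcases hs with rfl | rfl <;> omega

lemma sgn4_mul (m k : ℤ) (hm : m % 2 = 1) (hk : k % 2 = 1) :
    sgn4 m * sgn4 k = sgn4 (m * k) := by
  have h1 := Int.mul_emod m k 4
  have hm4 : m % 4 = 1 ∨ m % 4 = 3 := by omega
  have hk4 : k % 4 = 1 ∨ k % 4 = 3 := by omega
  unfold sgn4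
  rcases hm4 with h | h <;> rcases hk4 with h' | h' <;>
    rw [h, h'] at h1 <;> norm_num at h1 <;> simp [h, h', h1]

lemma sq_mod_eight (x : ℤ) (hx : x % 2 = 1) : x^2 % 8 = 1 := by
  obtain ⟨k, hk⟩ : ∃ k, x = 2*k+1 := ⟨(x-1)/2, by omega⟩
  obtain ⟨j, hj⟩ : ∃ j, k*(k+1) = 2*j := by
    rcases Int.even_mul_succ_self k with ⟨j, hj⟩
    exact ⟨j, by linarith⟩
  have hx2 : x^2 = 8*j + 1 := by subst hk; linear_combination 4*hj
  omega

lemma one_le_sq_of_odd (α : ℤ) (h : α % 2 = 1) : 1 ≤ α^2 := by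
  have : α ≤ -1 ∨ 1 ≤ α := by omega
  rcases this with h' | h' <;> nlinarith

lemma one_le_sq_of_ne (α : ℤ) (h : α ≠ 0) : 1 ≤ α^2 := by
  rcases lt_or_gt_of_ne h with h' | h' <;> nlinarith

lemma mod4_even_case (P X p c : ℤ) (h : P = 2*X - p + 4*c) (hX : X % 8 = 1)
    (hp : p % 8 = 1) : P % 4 = 1 := by omega

lemma mod4_odd_case (P X p c d : ℤ) (h : P = 2*X - p + 4*c + 2*d) (hX : X % 8 = 1)
    (hp : p % 8 = 1) (hd : d % 2 = 1) : P % 4 = 3 := by omega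

/-- Key classification: any representation of (a+b)p by au²+bv² with the
divisibility p ∣ xu+byv comes from the known one. -/
lemma classify (a b p x y u v : ℤ) (ha : 0 < a) (hb : 0 < b)
    (hb2 : b % 2 = 0) (hy2 : y % 2 = 0)
    (hpp : Prime p) (hpb : ¬ p ∣ b)
    (hx2 : x % 2 = 1) (hu2 : u % 2 = 1) (hv2 : v % 2 = 1)
    (hpx : p = x^2 + a*b*y^2) (huv : a*u^2 + b*v^2 = (a+b)*p)
    (hA : p ∣ x*u + b*y*v) :
    ∃ α β : ℤ, (α = 1 ∨ α = -1) ∧ (β = 1 ∨ β = -1) ∧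
      u = α*x - β*(b*y) ∧ v = β*x + α*(a*y) := by
  obtain ⟨α, hα⟩ := hA
  have hII : a*(x*u + b*y*v)^2 + b*(x*v - a*y*u)^2 = (a+b)*p^2 := by
    linear_combination (-(a*u^2+b*v^2)) * hpx + p * huv
  have hB2 : b*(x*v - a*y*u)^2 = p^2*((a+b) - a*α^2) := by
    linear_combination hII - (a*((x*u+b*y*v) + p*α)) * hα
  have hdvd : p ∣ b*(x*v - a*y*u)^2 := ⟨p*((a+b) - a*α^2), by linear_combination hB2⟩
  have hpB : p ∣ (x*v - a*y*u) := by
    rcases (hpp.2.2 _ _ hdvd) with h | h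
    · exact absurd h hpb
    · exact hpp.dvd_of_dvd_pow h
  obtain ⟨β, hβ⟩ := hpB
  have hp2 : p ≠ 0 := hpp.ne_zero
  have hsum : a*α^2 + b*β^2 = a+b := by
    have h1 : p^2*(a*α^2 + b*β^2) = p^2*(a+b) := by
      rw [hα, hβ] at hII; linear_combination hII
    exact mul_left_cancel₀ (pow_ne_zero 2 hp2) h1
  have hxu : Odd (x*u) := (Int.odd_iff.mpr hx2).mul (Int.odd_iff.mpr hu2)
  have hxv : Odd (x*v) := (Int.odd_iff.mpr hx2).mul (Int.odd_iff.mpr hv2)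
  have hbyv : Even (b*y*v) := ((Int.even_iff.mpr hb2).mul_right y).mul_right v
  have hayu : Even (a*y*u) := ((Int.even_iff.mpr hy2).mul_left a).mul_right u
  have hαodd : α % 2 = 1 := by
    have h1 : Odd (p*α) := by rw [← hα]; exact hxu.add_even hbyv
    exact Int.odd_iff.mp (Int.odd_mul.mp h1).2
  have hβodd : β % 2 = 1 := by
    have h1 : Odd (p*β) := by rw [← hβ]; exact hxv.sub_even hayu
    exact Int.odd_iff.mp (Int.odd_mul.mp h1).2
  have h1α : 1 ≤ α^2 := one_le_sq_of_odd α hαodd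
  have h1β : 1 ≤ β^2 := one_le_sq_of_odd β hβodd
  have hα2 : α^2 = 1 := by nlinarith
  have hβ2 : β^2 = 1 := by nlinarith
  have hαpm : α = 1 ∨ α = -1 := by
    rcases mul_eq_zero.mp (show (α-1)*(α+1) = 0 by linear_combination hα2) with h | h
    · left; linarith
    · right; linarith
  have hβpm : β = 1 ∨ β = -1 := by
    rcases mul_eq_zero.mp (show (β-1)*(β+1) = 0 by linear_combination hβ2) with h | h
    · left; linarith
    · right; linarith
  have e1 : x*u + b*y*v = x*(α*x - β*(b*y)) + b*y*(β*x + α*(a*y)) := by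
    rw [hα]; linear_combination α*hpx
  have e2 : x*v - a*y*u = x*(β*x + α*(a*y)) - a*y*(α*x - β*(b*y)) := by
    rw [hβ]; linear_combination β*hpx
  have hu' : u = α*x - β*(b*y) := by
    have hkey : p*(u - (α*x - β*(b*y))) = 0 := by
      linear_combination x*e1 - b*y*e2 + (u - (α*x - β*(b*y)))*hpx
    have := (mul_eq_zero.mp hkey).resolve_left hp2
    linarith
  have hv' : v = β*x + α*(a*y) := by
    have hx0 : x ≠ 0 := by omega
    have hkey : x*(v - (β*x + α*(a*y))) = 0 := by linear_combination e2 + a*y*hu'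
    have := (mul_eq_zero.mp hkey).resolve_left hx0
    linarith
  exact ⟨α, β, hαpm, hβpm, hu', hv'⟩

/-- `lam a b N` is λ(a, b; N+1): the finite sum of x·y over all integer pairs (x, y)
with x ≡ y ≡ 1 (mod 4) and a·x² + b·y² = 8N + a + b. -/
noncomputable def lam (a b N : ℤ) : ℤ :=
  ∑ᶠ xy ∈ {xy : ℤ × ℤ | xy.1 % 4 = 1 ∧ xy.2 % 4 = 1 ∧
      a * xy.1 ^ 2 + b * xy.2 ^ 2 = 8 * N + a + b}, xy.1 * xy.2

theorem stmt4 (a b : ℤ) (ha : 0 < a) (hb : 0 < b) (hao : Odd a) (hbe : 2 ∣ b)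
    (hb8 : ¬ (8 ∣ b)) (hcop : IsCoprime a b)
    (p : ℕ) (hp : p.Prime) (hp8 : p % 8 = 1)
    (hpab : (p : ℤ) ≠ a * b) (hpab1 : (p : ℤ) ≠ a * b + 1)
    (x y : ℤ) (hxy : (p : ℤ) = x ^ 2 + a * b * y ^ 2)
    (n : ℤ) (hn : n = (a + b) * ((p : ℤ) - 1) / 8) :
    2 ∣ y ∧ (8 : ℤ) ∣ (a + b) * ((p : ℤ) - 1) ∧
      (-1 : ℤ) ^ (y / 2).natAbs * (4 * x ^ 2 - 2 * (p : ℤ)) = lam a b n := by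
  have hpZ : Prime (p : ℤ) := Nat.prime_iff_prime_int.mp hp
  have hp8Z : (p : ℤ) % 8 = 1 := by omega
  have ha2 : a % 2 = 1 := Int.odd_iff.mp hao
  have hb2 : b % 2 = 0 := Int.even_iff.mp (even_iff_two_dvd.mpr hbe)
  have hx2 : x % 2 = 1 := by
    rcases Int.even_or_odd x with he | ho
    · exfalso
      have h1 : Even (x ^ 2) := Int.even_pow.mpr ⟨he, two_ne_zero⟩
      have h2 : Even (a * b * y ^ 2) := ((Int.even_iff.mpr hb2).mul_left a).mul_right _
      have h3 : Even ((p : ℤ)) := hxy ▸ h1.add h2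
      have := Int.even_iff.mp h3; omega
    · exact Int.odd_iff.mp ho
  have hx8 : x ^ 2 % 8 = 1 := sq_mod_eight x hx2
  -- y is even
  have hy2 : y % 2 = 0 := by
    by_contra hyodd
    have hy1 : y % 2 = 1 := by omega
    have hy8 : y ^ 2 % 8 = 1 := sq_mod_eight y hy1
    obtain ⟨m, hm⟩ : ∃ m, y ^ 2 = 8 * m + 1 := ⟨y ^ 2 / 8, by omega⟩
    obtain ⟨m', hm'⟩ : ∃ m', x ^ 2 = 8 * m' + 1 := ⟨x ^ 2 / 8, by omega⟩
    obtain ⟨l, hl⟩ : ∃ l : ℤ, (p : ℤ) = 8 * l + 1 := ⟨(p : ℤ) / 8, by omega⟩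
    have h8ab : (8 : ℤ) ∣ a * b := ⟨l - m' - a * b * m, by
      linear_combination -hxy + hl - hm' - (a * b) * hm⟩
    have hcop8 : IsCoprime (8 : ℤ) a := by
      obtain ⟨s, hs⟩ : ∃ s, a ^ 2 = 8 * s + 1 := ⟨a ^ 2 / 8, by have := sq_mod_eight a ha2; omega⟩
      exact ⟨-s, a, by linear_combination hs⟩
    exact hb8 (hcop8.dvd_of_dvd_mul_left h8ab)
  obtain ⟨l, hl⟩ : ∃ l : ℤ, (p : ℤ) = 8 * l + 1 := ⟨(p : ℤ) / 8, by omega⟩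
  have hdvd8 : (8 : ℤ) ∣ (a + b) * ((p : ℤ) - 1) := ⟨(a + b) * l, by linear_combination (a + b) * hl⟩
  have h8n : 8 * n = (a + b) * ((p : ℤ) - 1) := by rw [hn]; exact Int.mul_ediv_cancel' hdvd8
  have hM : 8 * n + a + b = (a + b) * (p : ℤ) := by linear_combination h8n
  have hx0 : x ≠ 0 := by omega
  have hy0 : y ≠ 0 := by
    intro h0
    have hps : (p : ℤ) = x * x := by rw [h0] at hxy; linear_combination hxy
    have hdx : (p : ℤ) ∣ x := (hpZ.2.2 x x ⟨1, by linarith⟩).elim id id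
    obtain ⟨c, hc⟩ := hdx
    have h1 : (p : ℤ) * 1 = (p : ℤ) * ((p:ℤ) * (c * c)) := by
      rw [hc] at hps; linear_combination hps
    have h2 : (1 : ℤ) = (p:ℤ) * (c * c) := mul_left_cancel₀ hpZ.ne_zero h1
    exact hpZ.not_isUnit (IsUnit.of_mul_eq_one _ h2.symm)
  have hpb : ¬ (p : ℤ) ∣ b := by
    intro hd
    have hle : (p : ℤ) ≤ b := Int.le_of_dvd hb hd
    have h1x : 1 ≤ x ^ 2 := one_le_sq_of_odd x hx2
    have h1y : 1 ≤ y ^ 2 := one_le_sq_of_ne y hy0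
    have ha1 : 1 ≤ a := by omega
    have h1ay : 1 ≤ a * y ^ 2 := by nlinarith [mul_le_mul ha1 h1y (by norm_num : (0:ℤ) ≤ 1) (by linarith : (0:ℤ) ≤ a)]
    have key : b ≤ a * b * y ^ 2 := by nlinarith [mul_le_mul_of_nonneg_left h1ay hb.le]
    linarith [hxy]
  -- the four odd numbers
  obtain ⟨c, hc⟩ := Int.dvd_of_emod_eq_zero (show (b * y) % 2 = 0 by
    rw [Int.mul_emod, hb2]; simp)
  obtain ⟨c', hc'⟩ := Int.dvd_of_emod_eq_zero (show (a * y) % 2 = 0 by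
    rw [Int.mul_emod, hy2]; simp)
  set x₁ : ℤ := x + b * y with hx₁
  set y₁ : ℤ := x - a * y with hy₁
  set x₂ : ℤ := x - b * y with hx₂
  set y₂ : ℤ := x + a * y with hy₂
  have hx₁o : x₁ % 2 = 1 := by rw [hx₁, hc]; omega
  have hy₁o : y₁ % 2 = 1 := by rw [hy₁, hc']; omega
  have hx₂o : x₂ % 2 = 1 := by rw [hx₂, hc]; omega
  have hy₂o : y₂ % 2 = 1 := by rw [hy₂, hc']; omega
  -- the set of solutions
  have hset : {xy : ℤ × ℤ | xy.1 % 4 = 1 ∧ xy.2 % 4 = 1 ∧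
      a * xy.1 ^ 2 + b * xy.2 ^ 2 = 8 * n + a + b} =
      {(sgn4 x₁ * x₁, sgn4 y₁ * y₁), (sgn4 x₂ * x₂, sgn4 y₂ * y₂)} := by
    ext ⟨u, v⟩
    simp only [Set.mem_setOf_eq, Set.mem_insert_iff, Set.mem_singleton_iff, Prod.mk.injEq]
    constructor
    · rintro ⟨hu4, hv4, heq⟩
      have huv : a * u ^ 2 + b * v ^ 2 = (a + b) * (p : ℤ) := heq.trans hM
      have hu2 : u % 2 = 1 := by omega
      have hv2 : v % 2 = 1 := by omega
      have hAA : (p : ℤ) ∣ (x * u + b * y * v) * (x * u - b * y * v) :=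
        ⟨u ^ 2 - b * (a + b) * y ^ 2, by
          linear_combination (-(u ^ 2)) * hxy + (-(b * y ^ 2)) * huv⟩
      rcases hpZ.2.2 _ _ hAA with hdA | hdA'
      · obtain ⟨α, β, hαpm, hβpm, hu', hv'⟩ :=
          classify a b (p : ℤ) x y u v ha hb hb2 hy2 hpZ hpb hx2 hu2 hv2 hxy huv hdA
        rcases hαpm with rfl | rfl <;> rcases hβpm with rfl | rfl
        · exact Or.inr ⟨sign_fix 1 x₂ u (Or.inl rfl) hu4 (by rw [hu', hx₂]; ring),
            sign_fix 1 y₂ v (Or.inl rfl) hv4 (by rw [hv', hy₂]; ring)⟩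
        · exact Or.inl ⟨sign_fix 1 x₁ u (Or.inl rfl) hu4 (by rw [hu', hx₁]; ring),
            sign_fix (-1) y₁ v (Or.inr rfl) hv4 (by rw [hv', hy₁]; ring)⟩
        · exact Or.inl ⟨sign_fix (-1) x₁ u (Or.inr rfl) hu4 (by rw [hu', hx₁]; ring),
            sign_fix 1 y₁ v (Or.inl rfl) hv4 (by rw [hv', hy₁]; ring)⟩
        · exact Or.inr ⟨sign_fix (-1) x₂ u (Or.inr rfl) hu4 (by rw [hu', hx₂]; ring),
            sign_fix (-1) y₂ v (Or.inr rfl) hv4 (by rw [hv', hy₂]; ring)⟩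
      · have hdA2 : (p : ℤ) ∣ x * u + b * (-y) * v := by
          rw [show x * u + b * (-y) * v = x * u - b * y * v from by ring]; exact hdA'
        have hy2' : (-y) % 2 = 0 := by omega
        have hpx' : (p : ℤ) = x ^ 2 + a * b * (-y) ^ 2 := by linear_combination hxy
        obtain ⟨α, β, hαpm, hβpm, hu', hv'⟩ :=
          classify a b (p : ℤ) x (-y) u v ha hb hb2 hy2' hpZ hpb hx2 hu2 hv2 hpx' huv hdA2
        rcases hαpm with rfl | rfl <;> rcases hβpm with rfl | rfl
        · exact Or.inl ⟨sign_fix 1 x₁ u (Or.inl rfl) hu4 (by rw [hu', hx₁]; ring),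
            sign_fix 1 y₁ v (Or.inl rfl) hv4 (by rw [hv', hy₁]; ring)⟩
        · exact Or.inr ⟨sign_fix 1 x₂ u (Or.inl rfl) hu4 (by rw [hu', hx₂]; ring),
            sign_fix (-1) y₂ v (Or.inr rfl) hv4 (by rw [hv', hy₂]; ring)⟩
        · exact Or.inr ⟨sign_fix (-1) x₂ u (Or.inr rfl) hu4 (by rw [hu', hx₂]; ring),
            sign_fix 1 y₂ v (Or.inl rfl) hv4 (by rw [hv', hy₂]; ring)⟩
        · exact Or.inl ⟨sign_fix (-1) x₁ u (Or.inr rfl) hu4 (by rw [hu', hx₁]; ring),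
            sign_fix (-1) y₁ v (Or.inr rfl) hv4 (by rw [hv', hy₁]; ring)⟩
    · rintro (⟨h1, h2⟩ | ⟨h1, h2⟩) <;> subst h1 <;> subst h2
      · refine ⟨sgn4_mul_self_mod x₁ hx₁o, sgn4_mul_self_mod y₁ hy₁o, ?_⟩
        rw [hM, mul_pow, mul_pow, sgn4_sq, sgn4_sq, one_mul, one_mul, hx₁, hy₁]
        linear_combination (-(a + b)) * hxy
      · refine ⟨sgn4_mul_self_mod x₂ hx₂o, sgn4_mul_self_mod y₂ hy₂o, ?_⟩
        rw [hM, mul_pow, mul_pow, sgn4_sq, sgn4_sq, one_mul, one_mul, hx₂, hy₂]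
        linear_combination (-(a + b)) * hxy
  have hPne : (sgn4 x₁ * x₁, sgn4 y₁ * y₁) ≠ (sgn4 x₂ * x₂, sgn4 y₂ * y₂) := by
    intro h
    have h1 : sgn4 x₁ * x₁ = sgn4 x₂ * x₂ := congrArg Prod.fst h
    have h2 : x₁ ^ 2 = x₂ ^ 2 := by
      have := congrArg (· ^ 2) h1
      simpa [mul_pow, sgn4_sq] using this
    have h4 : 4 * (b * (x * y)) = 0 := by rw [hx₁, hx₂] at h2; linear_combination h2
    have h5 : b * (x * y) = 0 := by linarith
    rcases mul_eq_zero.mp h5 with h | h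
    · exact absurd h (by positivity)
    · rcases mul_eq_zero.mp h with h | h
      · exact hx0 h
      · exact hy0 h
  refine ⟨Int.dvd_of_emod_eq_zero hy2, hdvd8, ?_⟩
  unfold lam
  rw [hset, finsum_mem_pair hPne]
  show (-1 : ℤ) ^ (y / 2).natAbs * (4 * x ^ 2 - 2 * (p : ℤ)) =
    (sgn4 x₁ * x₁) * (sgn4 y₁ * y₁) + (sgn4 x₂ * x₂) * (sgn4 y₂ * y₂)
  have hr1 : (sgn4 x₁ * x₁) * (sgn4 y₁ * y₁) = sgn4 (x₁ * y₁) * (x₁ * y₁) := by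
    rw [← sgn4_mul x₁ y₁ hx₁o hy₁o]; ring
  have hr2 : (sgn4 x₂ * x₂) * (sgn4 y₂ * y₂) = sgn4 (x₂ * y₂) * (x₂ * y₂) := by
    rw [← sgn4_mul x₂ y₂ hx₂o hy₂o]; ring
  rw [hr1, hr2]
  obtain ⟨w, hw⟩ : ∃ w : ℤ, w = (b - a) * x := ⟨_, rfl⟩
  have hwodd : w % 2 = 1 := by
    rw [hw, Int.mul_emod, show (b - a) % 2 = 1 from by omega, hx2]; norm_num
  have hyt : y = 2 * (y / 2) := by omega
  rcases Int.even_or_odd (y / 2) with hev | hod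
  · obtain ⟨s₀, hs₀⟩ := hev
    have hy4 : y = 4 * s₀ := by omega
    have hσ : (-1 : ℤ) ^ (y / 2).natAbs = 1 := (Int.natAbs_even.mpr ⟨s₀, hs₀⟩).neg_one_pow
    have hm1 : (x₁ * y₁) % 4 = 1 := by
      refine mod4_even_case _ (x ^ 2) (p : ℤ) (w * s₀) ?_ hx8 hp8Z
      rw [hx₁, hy₁]
      linear_combination hxy + ((b - a) * x) * hy4 - 4 * s₀ * hw
    have hm2 : (x₂ * y₂) % 4 = 1 := by
      refine mod4_even_case _ (x ^ 2) (p : ℤ) (-(w * s₀)) ?_ hx8 hp8Z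
      rw [hx₂, hy₂]
      linear_combination hxy - ((b - a) * x) * hy4 + 4 * s₀ * hw
    have hs1 : sgn4 (x₁ * y₁) = 1 := by unfold sgn4; rw [if_pos hm1]
    have hs2 : sgn4 (x₂ * y₂) = 1 := by unfold sgn4; rw [if_pos hm2]
    rw [hσ, hs1, hs2, hx₁, hy₁, hx₂, hy₂]
    linear_combination (-2 : ℤ) * hxy
  · obtain ⟨s₀, hs₀⟩ := hod
    have hy4 : y = 4 * s₀ + 2 := by omega
    have hσ : (-1 : ℤ) ^ (y / 2).natAbs = -1 := (Int.natAbs_odd.mpr ⟨s₀, hs₀⟩).neg_one_pow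
    have hm1 : (x₁ * y₁) % 4 = 3 := by
      refine mod4_odd_case _ (x ^ 2) (p : ℤ) (w * s₀) w ?_ hx8 hp8Z hwodd
      rw [hx₁, hy₁]
      linear_combination hxy + ((b - a) * x) * hy4 - (4 * s₀ + 2) * hw
    have hm2 : (x₂ * y₂) % 4 = 3 := by
      refine mod4_odd_case _ (x ^ 2) (p : ℤ) (-(w * s₀)) (-w) ?_ hx8 hp8Z (by omega)
      rw [hx₂, hy₂]
      linear_combination hxy - ((b - a) * x) * hy4 + (4 * s₀ + 2) * hw
    have hs1 : sgn4 (x₁ * y₁) = -1 := by unfold sgn4; rw [if_neg (by omega)]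
    have hs2 : sgn4 (x₂ * y₂) = -1 := by unfold sgn4; rw [if_neg (by omega)]
    rw [hσ, hs1, hs2, hx₁, hy₁, hx₂, hy₂]
    linear_combination (2 : ℤ) * hxy
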